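/- Let x ∈ Lip(□^d, ℝ^n) have Lipschitz constant L (with respect to the Euclidean norms on [0,1]^d and ℝ^n). Then for every m ≥ 1 and every level-m index (P,π) ∈ O_{d,n}^m × Σ_m^d, |Φ_m^{P,π}(x)| ≤ L^{dm} / (m!)^d. -/

import Mathlib

open MeasureTheory

open scoped Pointwise ENNReal

open scoped Classical

noncomputable section

/-- The unit cube `[0,1]^d` as a subset of `Fin d → ℝ`. -/
def unitCube (d : ℕ) : Set (Fin d → ℝ) := Set.Icc 0 1

/-- Lipschitz condition with constant `L`, with respect to Euclidean norms. -/
def EuclidLip {d n : ℕ} (L : ℝ) (x : (Fin d → ℝ) → Fin n → ℝ) : Prop :=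
  ∀ s t : Fin d → ℝ,
    Real.sqrt (∑ k, (x s k - x t k) ^ 2) ≤ L * Real.sqrt (∑ j, (s j - t j) ^ 2)

/-- Lipschitz map. -/
def IsLipMap {d n : ℕ} (x : (Fin d → ℝ) → Fin n → ℝ) : Prop :=
  ∃ L : ℝ, EuclidLip L x

/-- The Jacobian minor `J[x_P](s)`: the determinant of the `d × d` matrix
with `(i,j)` entry `∂ x_{P i} / ∂ s_j (s)`. -/
def jacobianMinor {d n : ℕ} (x : (Fin d → ℝ) → Fin n → ℝ) (P : Fin d → Fin n)
    (s : Fin d → ℝ) : ℝ :=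
  (Matrix.of fun i j : Fin d => fderiv ℝ (fun t => x t (P i)) s (Pi.single j 1)).det

/-- The permuted `m`-simplex `Δ^m_π(a,b)`. -/
def permSimplex {m : ℕ} (π : Equiv.Perm (Fin m)) (a b : ℝ) : Set (Fin m → ℝ) :=
  {u | (∀ i, u i ∈ Set.Icc a b) ∧ StrictMono fun i => u (π i)}

/-- The integration domain `D^{m,d}_π(a,b) = Δ^m_{π 1}(a₁,b₁) × ⋯ × Δ^m_{π d}(a_d,b_d)`. -/
def intDomain {m d : ℕ} (π : Fin d → Equiv.Perm (Fin m)) (a b : Fin d → ℝ) :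
    Set (Fin m → Fin d → ℝ) :=
  {t | ∀ j, (fun i => t i j) ∈ permSimplex (π j) (a j) (b j)}

/-- The restricted mapping space monomial `Φ_m^{P,π}(x)_{a,b}`. -/
def msMonomialOn {d n m : ℕ} (x : (Fin d → ℝ) → Fin n → ℝ)
    (P : Fin m → Fin d → Fin n) (π : Fin d → Equiv.Perm (Fin m))
    (a b : Fin d → ℝ) : ℝ :=
  ∫ t in intDomain π a b, ∏ i, jacobianMinor x (P i) (t i)

/-- The mapping space monomial `Φ_m^{P,π}(x)`. -/
def msMonomial {d n m : ℕ} (x : (Fin d → ℝ) → Fin n → ℝ)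
    (P : Fin m → Fin d → Fin n) (π : Fin d → Equiv.Perm (Fin m)) : ℝ :=
  msMonomialOn x P π (fun _ => 0) (fun _ => 1)

/-! ### Auxiliary lemmas -/

section Aux

open Finset

/-- Discrete Cauchy–Schwarz in square-root form. -/
lemma abs_sum_mul_le_sqrt {p : ℕ} (w y : Fin p → ℝ) :
    |∑ i, w i * y i| ≤ Real.sqrt (∑ i, w i ^ 2) * Real.sqrt (∑ i, y i ^ 2) := by
  have h := Finset.sum_mul_sq_le_sq_mul_sq Finset.univ w y
  calc |∑ i, w i * y i| = Real.sqrt ((∑ i, w i * y i) ^ 2) := (Real.sqrt_sq_eq_abs _).symm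
    _ ≤ Real.sqrt ((∑ i, w i ^ 2) * ∑ i, y i ^ 2) := Real.sqrt_le_sqrt h
    _ = _ := Real.sqrt_mul (Finset.sum_nonneg fun i _ => sq_nonneg _) _

lemma EuclidLip.nonneg {d n : ℕ} (hd : 0 < d) {L : ℝ} {x : (Fin d → ℝ) → Fin n → ℝ}
    (hx : EuclidLip L x) : 0 ≤ L := by
  set j0 : Fin d := ⟨0, hd⟩
  have h := hx (Pi.single j0 1) 0
  have h1 : ∑ j, ((Pi.single j0 1 : Fin d → ℝ) j - (0 : Fin d → ℝ) j) ^ 2 = 1 := by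
    have : ∀ j, ((Pi.single j0 1 : Fin d → ℝ) j - (0 : Fin d → ℝ) j) ^ 2
        = if j = j0 then (1:ℝ) else 0 := by
      intro j
      by_cases hj : j = j0 <;> simp [Pi.single_apply, hj]
    rw [Finset.sum_congr rfl fun j _ => this j]
    simp
  rw [h1, Real.sqrt_one, mul_one] at h
  exact le_trans (Real.sqrt_nonneg _) h

lemma lip_sub_sum {d n : ℕ} {L : ℝ} {x : (Fin d → ℝ) → Fin n → ℝ} (hx : EuclidLip L x)
    {P : Fin d → Fin n} (hP : Function.Injective P) (a b : Fin d → ℝ) :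
    Real.sqrt (∑ i, (x a (P i) - x b (P i)) ^ 2) ≤ L * Real.sqrt (∑ j, (a j - b j) ^ 2) := by
  refine le_trans (Real.sqrt_le_sqrt ?_) (hx a b)
  calc ∑ i, (x a (P i) - x b (P i)) ^ 2
      = ∑ k ∈ Finset.univ.image P, (x a k - x b k) ^ 2 :=
        (Finset.sum_image (M := ℝ) (g := P) (f := fun k => (x a k - x b k) ^ 2)
          (s := Finset.univ) (fun _ _ _ _ h => hP h)).symm
    _ ≤ ∑ k, (x a k - x b k) ^ 2 :=
        Finset.sum_le_sum_of_subset_of_nonneg (Finset.subset_univ _)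
          (fun _ _ _ => sq_nonneg _)

/-- Directional-derivative bound for a linear combination of coordinates. -/
lemma deriv_line_bound {d n : ℕ} {L : ℝ} {x : (Fin d → ℝ) → Fin n → ℝ} (hx : EuclidLip L x)
    (hL : 0 ≤ L) {P : Fin d → Fin n} (hP : Function.Injective P) {s : Fin d → ℝ}
    (hdiff : ∀ i, DifferentiableAt ℝ (fun t => x t (P i)) s) (w v : Fin d → ℝ) :
    |∑ i, w i * fderiv ℝ (fun t => x t (P i)) s v|
      ≤ Real.sqrt (∑ i, w i ^ 2) * (L * Real.sqrt (∑ j, v j ^ 2)) := by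
  set C : ℝ := Real.sqrt (∑ i, w i ^ 2) * (L * Real.sqrt (∑ j, v j ^ 2)) with hC
  have hCnn : 0 ≤ C := by positivity
  -- the line through s in direction v
  have hline : HasDerivAt (fun h : ℝ => s + h • v) v 0 := by
    simpa using ((hasDerivAt_id (0:ℝ)).smul_const v).const_add s
  -- the scalar function g
  set g : ℝ → ℝ := fun h => ∑ i, w i * x (s + h • v) (P i) with hg
  have hgd : HasDerivAt g (∑ i, w i * fderiv ℝ (fun t => x t (P i)) s v) 0 := by
    apply HasDerivAt.fun_sum
    intro i _
    refine HasDerivAt.const_mul _ ?_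
    have h1 : HasFDerivAt (fun t => x t (P i)) (fderiv ℝ (fun t => x t (P i)) s) s :=
      (hdiff i).hasFDerivAt
    have h2 : HasFDerivAt (fun t => x t (P i)) (fderiv ℝ (fun t => x t (P i)) s)
        ((fun h : ℝ => s + h • v) 0) := by simpa using h1
    exact h2.comp_hasDerivAt 0 hline
  -- g is Lipschitz with constant C
  have hlip : LipschitzWith (Real.toNNReal C) g := by
    apply LipschitzWith.of_dist_le_mul
    intro h h'
    rw [Real.dist_eq, Real.dist_eq, Real.coe_toNNReal _ hCnn]
    have hdiffg : g h - g h' = ∑ i, w i * (x (s + h • v) (P i) - x (s + h' • v) (P i)) := by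
      rw [hg]
      rw [← Finset.sum_sub_distrib]
      exact Finset.sum_congr rfl fun i _ => (mul_sub _ _ _).symm
    rw [hdiffg]
    calc |∑ i, w i * (x (s + h • v) (P i) - x (s + h' • v) (P i))|
        ≤ Real.sqrt (∑ i, w i ^ 2) *
          Real.sqrt (∑ i, (x (s + h • v) (P i) - x (s + h' • v) (P i)) ^ 2) :=
          abs_sum_mul_le_sqrt _ _
      _ ≤ Real.sqrt (∑ i, w i ^ 2) *
          (L * Real.sqrt (∑ j, ((s + h • v) j - (s + h' • v) j) ^ 2)) := by
          apply mul_le_mul_of_nonneg_left _ (Real.sqrt_nonneg _)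
          exact lip_sub_sum hx hP _ _
      _ = C * |h - h'| := by
          rw [hC]
          have h3 : ∀ j, ((s + h • v) j - (s + h' • v) j) ^ 2 = (h - h') ^ 2 * v j ^ 2 := by
            intro j
            simp only [Pi.add_apply, Pi.smul_apply, smul_eq_mul]
            ring
          rw [Finset.sum_congr rfl fun j _ => h3 j, ← Finset.mul_sum,
            Real.sqrt_mul (sq_nonneg _), Real.sqrt_sq_eq_abs]
          ring
  -- conclude
  have hF : HasFDerivAt g
      (ContinuousLinearMap.smulRight (1 : ℝ →L[ℝ] ℝ)
        (∑ i, w i * fderiv ℝ (fun t => x t (P i)) s v)) 0 := hgd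
  have hnorm := hF.le_of_lipschitz hlip
  have happ : (ContinuousLinearMap.smulRight (1 : ℝ →L[ℝ] ℝ)
      (∑ i, w i * fderiv ℝ (fun t => x t (P i)) s v)) 1
      = ∑ i, w i * fderiv ℝ (fun t => x t (P i)) s v := by simp
  calc |∑ i, w i * fderiv ℝ (fun t => x t (P i)) s v|
      = ‖(ContinuousLinearMap.smulRight (1 : ℝ →L[ℝ] ℝ)
          (∑ i, w i * fderiv ℝ (fun t => x t (P i)) s v)) 1‖ := by
        rw [happ, Real.norm_eq_abs]
    _ ≤ ‖ContinuousLinearMap.smulRight (1 : ℝ →L[ℝ] ℝ)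
          (∑ i, w i * fderiv ℝ (fun t => x t (P i)) s v)‖ * ‖(1:ℝ)‖ :=
        ContinuousLinearMap.le_opNorm _ _
    _ ≤ C := by
        rw [norm_one, mul_one]
        exact le_trans hnorm (by rw [Real.coe_toNNReal _ hCnn])

/-- The key estimate: the Jacobian matrix contracts Euclidean norms by factor `L`. -/
lemma mulVec_sqrt_le {d n : ℕ} {L : ℝ} {x : (Fin d → ℝ) → Fin n → ℝ} (hx : EuclidLip L x)
    (hL : 0 ≤ L) {P : Fin d → Fin n} (hP : Function.Injective P) {s : Fin d → ℝ}
    (hdiff : ∀ i, DifferentiableAt ℝ (fun t => x t (P i)) s) (v : Fin d → ℝ) :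
    Real.sqrt (∑ i, ((Matrix.of fun i j : Fin d =>
        fderiv ℝ (fun t => x t (P i)) s (Pi.single j 1)).mulVec v) i ^ 2)
      ≤ L * Real.sqrt (∑ j, v j ^ 2) := by
  set A : Matrix (Fin d) (Fin d) ℝ :=
    Matrix.of fun i j : Fin d => fderiv ℝ (fun t => x t (P i)) s (Pi.single j 1) with hA
  have hv : v = ∑ j, v j • (Pi.single j 1 : Fin d → ℝ) := by
    ext k
    rw [Finset.sum_apply]
    simp [Pi.single_apply]
  have hfd : ∀ i, fderiv ℝ (fun t => x t (P i)) s v = A.mulVec v i := by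
    intro i
    have hmv : A.mulVec v i = ∑ j, A i j * v j := by
      simp [Matrix.mulVec, dotProduct]
    conv_lhs => rw [hv]
    rw [map_sum, hmv]
    refine Finset.sum_congr rfl fun j _ => ?_
    rw [ContinuousLinearMap.map_smul, smul_eq_mul]
    exact mul_comm _ _
  have hkey := deriv_line_bound hx hL hP hdiff (A.mulVec v) v
  rw [Finset.sum_congr rfl (fun i _ => by rw [hfd i])] at hkey
  have hsq : ∑ i, A.mulVec v i * A.mulVec v i = ∑ i, A.mulVec v i ^ 2 := by
    exact Finset.sum_congr rfl fun i _ => (sq (A.mulVec v i)).symm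
  rw [hsq] at hkey
  set W : ℝ := Real.sqrt (∑ i, A.mulVec v i ^ 2) with hW
  have hWnn : 0 ≤ W := Real.sqrt_nonneg _
  have hW2 : W ^ 2 = ∑ i, A.mulVec v i ^ 2 :=
    Real.sq_sqrt (Finset.sum_nonneg fun i _ => sq_nonneg _)
  have habs : |∑ i, A.mulVec v i ^ 2| = ∑ i, A.mulVec v i ^ 2 :=
    abs_of_nonneg (Finset.sum_nonneg fun i _ => sq_nonneg _)
  rw [habs] at hkey
  rcases eq_or_lt_of_le hWnn with h0 | h0
  · rw [← h0]; positivity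
  · have : W * W ≤ W * (L * Real.sqrt (∑ j, v j ^ 2)) := by
      calc W * W = W ^ 2 := (sq W).symm
        _ = ∑ i, A.mulVec v i ^ 2 := hW2
        _ ≤ W * (L * Real.sqrt (∑ j, v j ^ 2)) := hkey
    exact le_of_mul_le_mul_left this h0

/-- Pointwise bound on the Jacobian minor of an `L`-Lipschitz map. -/
lemma jacobianMinor_abs_le {d n : ℕ} (hd : 0 < d) {L : ℝ} {x : (Fin d → ℝ) → Fin n → ℝ}
    (hx : EuclidLip L x) (hL : 0 ≤ L) {P : Fin d → Fin n} (hP : Function.Injective P)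
    (s : Fin d → ℝ) : |jacobianMinor x P s| ≤ L ^ d := by
  by_cases hdiff : ∀ i : Fin d, DifferentiableAt ℝ (fun t => x t (P i)) s
  · set A : Matrix (Fin d) (Fin d) ℝ :=
      Matrix.of fun i j : Fin d => fderiv ℝ (fun t => x t (P i)) s (Pi.single j 1) with hA
    have key := mulVec_sqrt_le hx hL hP hdiff
    have hgoal : jacobianMinor x P s = A.det := rfl
    rw [hgoal]
    rcases eq_or_lt_of_le hL with hL0 | hLpos
    · -- L = 0 : the matrix is zero
      have hAzero : A = 0 := by
        ext i j
        have h := key (Pi.single j 1)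
        rw [← hL0, zero_mul] at h
        have hz : Real.sqrt (∑ i, A.mulVec (Pi.single j 1) i ^ 2) = 0 :=
          le_antisymm h (Real.sqrt_nonneg _)
        have hsum : ∑ i, A.mulVec (Pi.single j 1) i ^ 2 = 0 :=
          (Real.sqrt_eq_zero (Finset.sum_nonneg fun _ _ => sq_nonneg _)).mp hz
        have hz2 := (Finset.sum_eq_zero_iff_of_nonneg
          (fun _ _ => sq_nonneg _)).mp hsum i (Finset.mem_univ i)
        have hz3 : A.mulVec (Pi.single j 1) i = 0 :=
          pow_eq_zero_iff two_ne_zero |>.mp hz2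
        have hmv : A.mulVec (Pi.single j 1) i = A i j := by
          rw [Matrix.mulVec, dotProduct]
          simp [Pi.single_apply]
        show A i j = 0
        rw [← hmv]
        exact hz3
      haveI := Fin.pos_iff_nonempty.mp hd
      rw [hAzero, Matrix.det_zero, ← hL0, zero_pow hd.ne']
      simp
    · -- 0 < L : measure-theoretic argument
      set B : Set (Fin d → ℝ) := {v | ∑ j, v j ^ 2 < 1} with hB
      have hBopen : IsOpen B :=
        isOpen_lt (by continuity) continuous_const
      have hB0 : (0 : Fin d → ℝ) ∈ B := by simp [hB]
      have hpos : 0 < volume B := hBopen.measure_pos volume ⟨0, hB0⟩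
      have hBsub : B ⊆ Set.univ.pi fun _ => Set.Icc (-1 : ℝ) 1 := by
        intro v hv j _
        have h1 : v j ^ 2 ≤ ∑ j', v j' ^ 2 :=
          Finset.single_le_sum (f := fun j' => v j' ^ 2) (fun _ _ => sq_nonneg _)
            (Finset.mem_univ j)
        have h2 : v j ^ 2 ≤ 1 := le_of_lt (lt_of_le_of_lt h1 hv)
        constructor <;> nlinarith
      have hfin : volume B < ⊤ := by
        refine lt_of_le_of_lt (measure_mono hBsub) ?_
        rw [volume_pi_pi]
        rw [Real.volume_Icc]
        rw [Finset.prod_const]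
        exact ENNReal.pow_lt_top ENNReal.ofReal_lt_top
      have himg : Matrix.toLin' A '' B ⊆ L • B := by
        rintro w ⟨v, hv, rfl⟩
        have h1 := key v
        have h2 : Real.sqrt (∑ j, v j ^ 2) < 1 := by
          rw [show (1:ℝ) = Real.sqrt 1 by rw [Real.sqrt_one]]
          exact Real.sqrt_lt_sqrt (Finset.sum_nonneg fun _ _ => sq_nonneg _) hv
        have h3 : Real.sqrt (∑ i, A.mulVec v i ^ 2) < L :=
          lt_of_le_of_lt h1 (by nlinarith [Real.sqrt_nonneg (∑ j, v j ^ 2)])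
        have h4 : ∑ i, A.mulVec v i ^ 2 < L ^ 2 :=
          (Real.sqrt_lt' hLpos).mp h3
        refine ⟨L⁻¹ • A.mulVec v, ?_, ?_⟩
        · show ∑ j, (L⁻¹ • A.mulVec v) j ^ 2 < 1
          simp only [Pi.smul_apply, smul_eq_mul, mul_pow]
          rw [← Finset.mul_sum]
          have hL2 : (0:ℝ) < L ^ 2 := by positivity
          calc L⁻¹ ^ 2 * ∑ i, A.mulVec v i ^ 2 < L⁻¹ ^ 2 * L ^ 2 :=
              mul_lt_mul_of_pos_left h4 (by positivity)
            _ = 1 := by field_simp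
        · rw [Matrix.toLin'_apply]
          show L • (L⁻¹ • A.mulVec v) = A.mulVec v
          rw [smul_smul, mul_inv_cancel₀ (ne_of_gt hLpos), one_smul]
      have e1 : volume (Matrix.toLin' A '' B)
          = ENNReal.ofReal |A.det| * volume B := by
        rw [Measure.addHaar_image_linearMap, LinearMap.det_toLin']
      have e2 : volume (L • B)
          = ENNReal.ofReal (L ^ d) * volume B := by
        rw [Measure.addHaar_smul]
        congr 2
        rw [abs_of_nonneg (by positivity : (0:ℝ) ≤ L ^ Module.finrank ℝ (Fin d → ℝ))]
        rw [Module.finrank_pi, Fintype.card_fin]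
      have hineq : ENNReal.ofReal |A.det| * volume B ≤ ENNReal.ofReal (L ^ d) * volume B := by
        rw [← e1, ← e2]
        exact measure_mono himg
      have hle : ENNReal.ofReal |A.det| ≤ ENNReal.ofReal (L ^ d) :=
        (ENNReal.mul_le_mul_iff_left (ne_of_gt hpos) hfin.ne).mp hineq
      exact (ENNReal.ofReal_le_ofReal_iff (by positivity)).mp hle
  · push_neg at hdiff
    obtain ⟨i0, hi0⟩ := hdiff
    have hzero : ∀ j, (Matrix.of fun i j : Fin d =>
        fderiv ℝ (fun t => x t (P i)) s (Pi.single j 1)) i0 j = 0 := by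
      intro j
      show fderiv ℝ (fun t => x t (P i0)) s (Pi.single j 1) = 0
      rw [fderiv_zero_of_not_differentiableAt hi0]
      rfl
    have : jacobianMinor x P s = 0 := Matrix.det_eq_zero_of_row_eq_zero i0 hzero
    rw [this, abs_zero]
    positivity


/-! ### Measurability -/

lemma measurableSet_permSimplex {m : ℕ} (π : Equiv.Perm (Fin m)) (a b : ℝ) :
    MeasurableSet (permSimplex π a b) := by
  have hset : permSimplex π a b
      = {u : Fin m → ℝ | ∀ i, u i ∈ Set.Icc a b}
        ∩ {u : Fin m → ℝ | StrictMono fun i => u (π i)} := rfl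
  rw [hset]
  apply MeasurableSet.inter
  · have : {u : Fin m → ℝ | ∀ i, u i ∈ Set.Icc a b}
        = ⋂ i, (fun u : Fin m → ℝ => u i) ⁻¹' Set.Icc a b := by
      ext u
      simp only [Set.mem_setOf_eq, Set.mem_iInter, Set.mem_preimage]
    rw [this]
    exact MeasurableSet.iInter fun i => measurableSet_Icc.preimage (measurable_pi_apply i)
  · have : {u : Fin m → ℝ | StrictMono fun i => u (π i)}
        = ⋂ (p : Fin m × Fin m) (_ : p.1 < p.2), {u : Fin m → ℝ | u (π p.1) < u (π p.2)} := by
      ext u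
      simp only [Set.mem_iInter, Set.mem_setOf_eq]
      exact ⟨fun h p hp => h hp, fun h i j hij => h (i, j) hij⟩
    rw [this]
    exact MeasurableSet.iInter fun p => MeasurableSet.iInter fun _ =>
      measurableSet_lt (measurable_pi_apply _) (measurable_pi_apply _)

lemma measurableSet_intDomain {m d : ℕ} (π : Fin d → Equiv.Perm (Fin m)) (a b : Fin d → ℝ) :
    MeasurableSet (intDomain π a b) := by
  have hset : intDomain π a b
      = ⋂ j, (fun (t : Fin m → Fin d → ℝ) (i : Fin m) => t i j) ⁻¹'
          permSimplex (π j) (a j) (b j) := by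
    ext t; simp [intDomain, Set.mem_iInter]
  rw [hset]
  exact MeasurableSet.iInter fun j =>
    (measurableSet_permSimplex _ _ _).preimage
      (measurable_pi_lambda _ fun i => (measurable_pi_apply j).comp (measurable_pi_apply i))

/-! ### Volume of the permuted simplex -/

lemma strictMono_perm_unique {m : ℕ} {u : Fin m → ℝ} {σ τ : Equiv.Perm (Fin m)}
    (hσ : StrictMono fun i => u (σ i)) (hτ : StrictMono fun i => u (τ i)) : σ = τ := by
  set ρ : Fin m → Fin m := fun i => σ.symm (τ i) with hρdef
  have hρ : StrictMono ρ := by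
    intro i j hij
    have h1 : u (τ i) < u (τ j) := hτ hij
    have h2 : u (σ (ρ i)) < u (σ (ρ j)) := by
      simpa [hρdef, Equiv.apply_symm_apply] using h1
    exact hσ.lt_iff_lt.mp h2
  have hsurj : Function.Surjective ρ := σ.symm.surjective.comp τ.surjective
  have hid : ρ = id := by
    have hsub := Subsingleton.elim (hρ.orderIsoOfSurjective ρ hsurj) (OrderIso.refl (Fin m))
    funext i
    calc ρ i = (hρ.orderIsoOfSurjective ρ hsurj) i := by
          rw [StrictMono.coe_orderIsoOfSurjective]
      _ = i := by rw [hsub]; rfl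
  have hfun : ∀ i, τ i = σ i := by
    intro i
    have := congrFun hid i
    simp only [hρdef, id_eq] at this
    have h := congrArg σ this
    rwa [Equiv.apply_symm_apply] at h
  exact Equiv.ext fun i => (hfun i).symm

lemma permSimplex_disjoint {m : ℕ} {σ τ : Equiv.Perm (Fin m)} (h : σ ≠ τ) :
    Disjoint (permSimplex σ (0:ℝ) 1) (permSimplex τ (0:ℝ) 1) :=
  Set.disjoint_left.mpr fun _ hu1 hu2 => h (strictMono_perm_unique hu1.2 hu2.2)

lemma volume_permSimplex_eq {m : ℕ} (σ : Equiv.Perm (Fin m)) :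
    volume (permSimplex σ (0:ℝ) 1) = volume (permSimplex (1 : Equiv.Perm (Fin m)) (0:ℝ) 1) := by
  have hmp := MeasureTheory.volume_measurePreserving_piCongrLeft (fun _ : Fin m => ℝ) σ.symm
  set e : (Fin m → ℝ) → (Fin m → ℝ)
    := ⇑(MeasurableEquiv.piCongrLeft (fun _ : Fin m => ℝ) σ.symm) with hedef
  have hee : ∀ (u : Fin m → ℝ) (i : Fin m), e u i = u (σ i) := by
    intro u i
    have h := Equiv.piCongrLeft_apply_apply (fun _ : Fin m => ℝ) σ.symm u (σ i)
    have h2 : σ.symm (σ i) = i := Equiv.symm_apply_apply σ i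
    rw [h2] at h
    exact h
  have hpre : e ⁻¹' permSimplex (1 : Equiv.Perm (Fin m)) (0:ℝ) 1 = permSimplex σ (0:ℝ) 1 := by
    ext u
    have hIcc : (∀ i, e u i ∈ Set.Icc (0:ℝ) 1) ↔ ∀ i, u i ∈ Set.Icc (0:ℝ) 1 := by
      constructor
      · intro h i
        have := h (σ.symm i)
        rwa [hee u (σ.symm i), Equiv.apply_symm_apply] at this
      · intro h i
        rw [hee]
        exact h _
    have hSM : (StrictMono fun i => e u ((1 : Equiv.Perm (Fin m)) i))
        ↔ StrictMono fun i => u (σ i) := by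
      constructor
      · intro h i j hij
        have := h hij
        simpa only [Equiv.Perm.coe_one, id_eq, hee] using this
      · intro h i j hij
        simpa only [Equiv.Perm.coe_one, id_eq, hee] using h hij
    simp only [Set.mem_preimage, permSimplex, Set.mem_setOf_eq]
    exact and_congr hIcc hSM
  calc volume (permSimplex σ (0:ℝ) 1)
      = volume (e ⁻¹' permSimplex (1 : Equiv.Perm (Fin m)) (0:ℝ) 1) := by rw [hpre]
    _ = volume (permSimplex (1 : Equiv.Perm (Fin m)) (0:ℝ) 1) :=
        hmp.measure_preimage (measurableSet_permSimplex _ _ _).nullMeasurableSet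

lemma volume_permSimplex_le {m : ℕ} (σ : Equiv.Perm (Fin m)) :
    volume (permSimplex σ (0:ℝ) 1) ≤ ((Nat.factorial m : ℝ≥0∞))⁻¹ := by
  rw [volume_permSimplex_eq σ, ENNReal.le_inv_iff_mul_le]
  have hcube : volume (Set.univ.pi fun _ : Fin m => Set.Icc (0:ℝ) 1) = 1 := by
    rw [volume_pi_pi]
    simp [Real.volume_Icc]
  have hU : volume (⋃ τ : Equiv.Perm (Fin m), permSimplex τ (0:ℝ) 1)
      = ∑' τ : Equiv.Perm (Fin m), volume (permSimplex τ (0:ℝ) 1) :=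
    measure_iUnion (fun τ τ' h => permSimplex_disjoint h)
      (fun τ => measurableSet_permSimplex _ _ _)
  have hsum : ∑' τ : Equiv.Perm (Fin m), volume (permSimplex τ (0:ℝ) 1)
      = (Nat.factorial m : ℝ≥0∞) * volume (permSimplex (1 : Equiv.Perm (Fin m)) (0:ℝ) 1) := by
    rw [tsum_fintype]
    rw [Finset.sum_congr rfl fun τ _ => volume_permSimplex_eq τ]
    rw [Finset.sum_const, Finset.card_univ, Fintype.card_perm, Fintype.card_fin, nsmul_eq_mul]
  have hsub : (⋃ τ : Equiv.Perm (Fin m), permSimplex τ (0:ℝ) 1)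
      ⊆ Set.univ.pi fun _ : Fin m => Set.Icc (0:ℝ) 1 := by
    refine Set.iUnion_subset fun τ u hu => ?_
    intro j _
    exact hu.1 j
  calc volume (permSimplex (1 : Equiv.Perm (Fin m)) (0:ℝ) 1) * (Nat.factorial m : ℝ≥0∞)
      = (Nat.factorial m : ℝ≥0∞) * volume (permSimplex (1 : Equiv.Perm (Fin m)) (0:ℝ) 1) :=
        mul_comm _ _
    _ = volume (⋃ τ : Equiv.Perm (Fin m), permSimplex τ (0:ℝ) 1) := by rw [hU, hsum]
    _ ≤ volume (Set.univ.pi fun _ : Fin m => Set.Icc (0:ℝ) 1) := measure_mono hsub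
    _ = 1 := hcube

/-! ### Volume of the integration domain -/

lemma volume_col_pi {m d : ℕ} (S : Fin d → Set (Fin m → ℝ)) (hS : ∀ j, MeasurableSet (S j)) :
    volume {t : Fin m → Fin d → ℝ | ∀ j, (fun i => t i j) ∈ S j} = ∏ j, volume (S j) := by
  set e : (Fin m → Fin d → ℝ) → (Fin d → Fin m → ℝ) := fun t j i => t i j with he
  have hemeas : Measurable e := measurable_pi_lambda _ fun j => measurable_pi_lambda _ fun i =>
    (measurable_pi_apply j).comp (measurable_pi_apply i)
  set C : Fin d → Set (Set (Fin m → ℝ)) := fun _ =>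
    Set.pi Set.univ '' Set.pi Set.univ (fun _ : Fin m => {s : Set ℝ | MeasurableSet s}) with hC
  have h3 : ∀ _ : Fin d, (volume : Measure (Fin m → ℝ)).FiniteSpanningSetsIn
      (Set.pi Set.univ '' Set.pi Set.univ (fun _ : Fin m => {s : Set ℝ | MeasurableSet s})) := by
    intro _
    have h := Measure.FiniteSpanningSetsIn.pi
      (μ := fun _ : Fin m => (volume : Measure ℝ))
      (C := fun _ => {s : Set ℝ | MeasurableSet s})
      (fun _ => (volume : Measure ℝ).toFiniteSpanningSetsIn)
    rwa [← volume_pi] at h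
  have main : Measure.pi (fun _ : Fin d => (volume : Measure (Fin m → ℝ)))
      = Measure.map e volume := by
    refine Measure.pi_eq_generateFrom (fun _ => generateFrom_pi) (fun _ => isPiSystem_pi)
      h3 ?_
    intro s hs
    have hs' : ∀ j : Fin d, ∃ f : Fin m → Set ℝ,
        (∀ i, MeasurableSet (f i)) ∧ Set.univ.pi f = s j := by
      intro j
      obtain ⟨f, hf, hfe⟩ := hs j
      exact ⟨f, fun i => hf i (Set.mem_univ i), hfe⟩
    choose f hf hfe using hs'
    have hsm : ∀ j, MeasurableSet (s j) := by
      intro j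
      rw [← hfe j]
      exact MeasurableSet.univ_pi fun i => hf j i
    rw [Measure.map_apply hemeas (MeasurableSet.univ_pi hsm)]
    have hpre : e ⁻¹' Set.univ.pi s = Set.univ.pi fun i : Fin m =>
        Set.univ.pi fun j : Fin d => f j i := by
      ext t
      simp only [Set.mem_preimage, Set.mem_pi, Set.mem_univ, forall_true_left, he]
      constructor
      · intro h i j
        have h2 := h j
        rw [← hfe j] at h2
        exact h2 i (Set.mem_univ i)
      · intro h j
        rw [← hfe j]
        exact fun i _ => h i j
    rw [hpre, volume_pi_pi]
    have hinner : ∀ i : Fin m, volume (Set.univ.pi fun j : Fin d => f j i)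
        = ∏ j, volume (f j i) := fun i => volume_pi_pi _
    rw [Finset.prod_congr rfl fun i _ => hinner i, Finset.prod_comm]
    refine Finset.prod_congr rfl fun j _ => ?_
    rw [← hfe j, volume_pi_pi]
  have hset : {t : Fin m → Fin d → ℝ | ∀ j, (fun i => t i j) ∈ S j}
      = e ⁻¹' Set.univ.pi S := by
    ext t
    simp [Set.mem_pi, he]
  rw [hset, ← Measure.map_apply hemeas (MeasurableSet.univ_pi hS), ← main,
    Measure.pi_pi]

lemma volume_intDomain_le {m d : ℕ} (π : Fin d → Equiv.Perm (Fin m)) :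
    volume (intDomain π (fun _ => (0:ℝ)) (fun _ => 1))
      ≤ ((Nat.factorial m : ℝ≥0∞))⁻¹ ^ d := by
  have h := volume_col_pi (fun j => permSimplex (π j) (0:ℝ) 1)
    (fun j => measurableSet_permSimplex _ _ _)
  have hset : intDomain π (fun _ => (0:ℝ)) (fun _ => 1)
      = {t : Fin m → Fin d → ℝ | ∀ j, (fun i => t i j) ∈ permSimplex (π j) (0:ℝ) 1} := rfl
  rw [hset, h]
  calc ∏ j : Fin d, volume (permSimplex (π j) (0:ℝ) 1)
      ≤ ∏ _j : Fin d, ((Nat.factorial m : ℝ≥0∞))⁻¹ :=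
        Finset.prod_le_prod' fun j _ => volume_permSimplex_le (π j)
    _ = ((Nat.factorial m : ℝ≥0∞))⁻¹ ^ d := by
        rw [Finset.prod_const, Finset.card_univ, Fintype.card_fin]


end Aux

/-- factorial decay bound `|Φ_m^{P,π}(x)| ≤ L^{dm} / (m!)^d` for an
`L`-Lipschitz (Euclidean norms) map `x`. -/
theorem stmt5 (d n m : ℕ) (hd : 1 ≤ d) (hn : d ≤ n) (hm : 1 ≤ m) (L : ℝ)
    (x : (Fin d → ℝ) → Fin n → ℝ) (hx : EuclidLip L x)
    (P : Fin m → Fin d → Fin n) (hP : ∀ i, StrictMono (P i))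
    (π : Fin d → Equiv.Perm (Fin m)) :
    |msMonomial x P π| ≤ L ^ (d * m) / (Nat.factorial m : ℝ) ^ d := by
  have hd0 : 0 < d := hd
  have hL : 0 ≤ L := EuclidLip.nonneg hd0 hx
  set D : Set (Fin m → Fin d → ℝ) := intDomain π (fun _ => (0:ℝ)) (fun _ => 1) with hD
  have hDm : MeasurableSet D := measurableSet_intDomain _ _ _
  have hvol : volume D ≤ ((Nat.factorial m : ℝ≥0∞))⁻¹ ^ d := volume_intDomain_le π
  have hItop : ((Nat.factorial m : ℝ≥0∞))⁻¹ ^ d < ⊤ := by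
    refine ENNReal.pow_lt_top ?_
    rw [ENNReal.inv_lt_top]
    exact_mod_cast Nat.factorial_pos m
  have hDfin : volume D < ⊤ := lt_of_le_of_lt hvol hItop
  have hbound : ∀ t ∈ D, ‖∏ i, jacobianMinor x (P i) (t i)‖ ≤ (L ^ d) ^ m := by
    intro t _
    rw [Real.norm_eq_abs, Finset.abs_prod]
    calc ∏ i, |jacobianMinor x (P i) (t i)|
        ≤ ∏ _i : Fin m, L ^ d :=
          Finset.prod_le_prod (fun _ _ => abs_nonneg _)
            (fun i _ => jacobianMinor_abs_le hd0 hx hL (hP i).injective _)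
      _ = (L ^ d) ^ m := by rw [Finset.prod_const, Finset.card_univ, Fintype.card_fin]
  have hint := norm_setIntegral_le_of_norm_le_const hDfin hbound
  have htoReal : (volume D).toReal ≤ ((Nat.factorial m : ℝ)⁻¹) ^ d := by
    have h1 := ENNReal.toReal_mono hItop.ne hvol
    have h2 : (((Nat.factorial m : ℝ≥0∞))⁻¹ ^ d).toReal = ((Nat.factorial m : ℝ)⁻¹) ^ d := by
      rw [ENNReal.toReal_pow, ENNReal.toReal_inv, ENNReal.toReal_natCast]
    rwa [h2] at h1
  calc |msMonomial x P π|
      = ‖∫ t in D, ∏ i, jacobianMinor x (P i) (t i)‖ := by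
        rw [Real.norm_eq_abs]
        rfl
    _ ≤ (L ^ d) ^ m * (volume D).toReal := hint
    _ ≤ (L ^ d) ^ m * ((Nat.factorial m : ℝ)⁻¹) ^ d := by
        exact mul_le_mul_of_nonneg_left htoReal (by positivity)
    _ = L ^ (d * m) / (Nat.factorial m : ℝ) ^ d := by
        rw [← pow_mul, div_eq_mul_inv, inv_pow]

end
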